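/- Let f : ℝ^d → ℝ be integrable with compact support and b > 0. Then for all x ∈ ℝ, |∫_{supp f} f(s)/(b − i f(s) x) ds| ≲ (1 + x²)^{−1/2}, i.e. there exists a constant C (depending on f and b) such that the left-hand side is at most C (1+x²)^{−1/2}. -/

import Mathlib

open MeasureTheory Complex

/-- For an integrable compactly supported `f : ℝ^d → ℝ` and `b > 0`,
`|∫_{supp f} f(s)/(b − i f(s) x) ds| ≲ (1 + x²)^{-1/2}` for all `x ∈ ℝ`. -/
theorem gamma_assumption_four {d : ℕ} (f : (Fin d → ℝ) → ℝ) (b : ℝ) (hb : 0 < b)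
    (hf : Measurable f) (hint : Integrable f) (hcs : HasCompactSupport f) :
    ∃ C : ℝ, ∀ x : ℝ,
      ‖∫ s in Function.support f, ((f s : ℝ) : ℂ) / ((b : ℂ) - Complex.I * (f s * x))‖ ≤
        C * (1 + x ^ 2) ^ (-(1/2) : ℝ) := by
  have hKvol : volume (Function.support f) < ⊤ :=
    lt_of_le_of_lt (measure_mono (subset_tsupport f)) hcs.measure_lt_top
  set M : ℝ := (volume (Function.support f)).toReal with hM
  have hMnn : 0 ≤ M := ENNReal.toReal_nonneg
  set I1 : ℝ := (∫ s, |f s|) / b with hI1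
  have hI1nn : 0 ≤ I1 := by
    apply div_nonneg _ hb.le
    exact integral_nonneg fun s => abs_nonneg _
  refine ⟨I1 + M, fun x => ?_⟩
  set g : (Fin d → ℝ) → ℂ := fun s => ((f s : ℝ) : ℂ) / ((b : ℂ) - Complex.I * (f s * x))
    with hg
  -- norm of denominator
  have hden : ∀ s, ‖(b : ℂ) - Complex.I * (f s * x)‖ = Real.sqrt (b ^ 2 + (f s * x) ^ 2) := by
    intro s
    have : (b : ℂ) - Complex.I * (f s * x) = (b : ℝ) + ((-(f s * x) : ℝ) : ℂ) * Complex.I := by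
      push_cast; ring
    rw [this, Complex.norm_add_mul_I]
    ring_nf
  have hdenpos : ∀ s, 0 < Real.sqrt (b ^ 2 + (f s * x) ^ 2) := by
    intro s
    apply Real.sqrt_pos.mpr
    positivity
  have hdenge : ∀ s, b ≤ Real.sqrt (b ^ 2 + (f s * x) ^ 2) := by
    intro s
    have : b = Real.sqrt (b ^ 2) := by rw [Real.sqrt_sq hb.le]
    rw [this]
    exact Real.sqrt_le_sqrt (by nlinarith [sq_nonneg (f s * x), Real.sq_sqrt hb.le])
  have hnormg : ∀ s, ‖g s‖ = |f s| / Real.sqrt (b ^ 2 + (f s * x) ^ 2) := by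
    intro s
    rw [hg]
    simp only [norm_div, Complex.norm_real, Real.norm_eq_abs, hden]
  -- pointwise bounds
  have hbd1 : ∀ s, ‖g s‖ ≤ |f s| / b := by
    intro s
    rw [hnormg]
    exact div_le_div_of_nonneg_left (abs_nonneg _) hb (hdenge s)
  have hbd2 : ∀ s, |x| * ‖g s‖ ≤ 1 := by
    intro s
    rw [hnormg, mul_div_assoc']
    rw [div_le_one (hdenpos s)]
    have h1 : |x| * |f s| = |f s * x| := by rw [abs_mul]; ring
    rw [h1]
    calc |f s * x| = Real.sqrt ((f s * x) ^ 2) := (Real.sqrt_sq_eq_abs _).symm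
    _ ≤ Real.sqrt (b ^ 2 + (f s * x) ^ 2) := Real.sqrt_le_sqrt (by nlinarith [sq_nonneg b])
  -- integrability
  have hgm : AEStronglyMeasurable g (volume.restrict (Function.support f)) := by
    apply Measurable.aestronglyMeasurable
    apply Measurable.div
    · exact (Complex.measurable_ofReal.comp hf)
    · apply Measurable.const_sub
      exact ((Complex.measurable_ofReal.comp hf).mul_const (x : ℂ)).const_mul Complex.I
  have hintabs : IntegrableOn (fun s => |f s| / b) (Function.support f) volume :=
    (hint.abs.div_const b).restrict
  have hintg : IntegrableOn g (Function.support f) volume := by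
    apply Integrable.mono hintabs hgm
    filter_upwards with s
    rw [Real.norm_eq_abs, _root_.abs_of_nonneg (by positivity : (0:ℝ) ≤ |f s| / b)]
    exact hbd1 s
  set B : ℝ := ∫ s in Function.support f, ‖g s‖ with hB
  have hAB : ‖∫ s in Function.support f, g s‖ ≤ B := norm_integral_le_integral_norm g
  have hBnn : 0 ≤ B := integral_nonneg fun s => norm_nonneg _
  -- B ≤ I1
  have hBI1 : B ≤ I1 := by
    calc B ≤ ∫ s in Function.support f, |f s| / b :=
          integral_mono hintg.norm hintabs hbd1
    _ = (∫ s in Function.support f, |f s|) / b := integral_div _ _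
    _ ≤ I1 := by
        rw [hI1]
        gcongr ?_ / _
        exact setIntegral_le_integral hint.abs
          (Filter.Eventually.of_forall fun s => abs_nonneg _)
  -- |x| * B ≤ M
  have hxB : |x| * B ≤ M := by
    have h1 : |x| * B = ∫ s in Function.support f, |x| * ‖g s‖ := by
      rw [hB, integral_const_mul]
    rw [h1]
    have hconst : IntegrableOn (fun _ => (1 : ℝ)) (Function.support f) volume := by
      exact integrableOn_const hKvol.ne
    calc (∫ s in Function.support f, |x| * ‖g s‖)
        ≤ ∫ s in Function.support f, (1 : ℝ) :=
          integral_mono (hintg.norm.const_mul _) hconst hbd2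
    _ = M := by rw [setIntegral_const, smul_eq_mul, mul_one, hM]; rfl
  -- conclude
  have hsqrt : Real.sqrt (1 + x ^ 2) ≤ 1 + |x| := by
    have : (1 : ℝ) + x ^ 2 ≤ (1 + |x|) ^ 2 := by nlinarith [abs_nonneg x, _root_.sq_abs x]
    calc Real.sqrt (1 + x ^ 2) ≤ Real.sqrt ((1 + |x|) ^ 2) := Real.sqrt_le_sqrt this
    _ = 1 + |x| := Real.sqrt_sq (by positivity)
  have hpow : ((1 : ℝ) + x ^ 2) ^ (-(1/2) : ℝ) = (Real.sqrt (1 + x ^ 2))⁻¹ := by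
    rw [Real.rpow_neg (by positivity), ← Real.sqrt_eq_rpow]
  have hsq_pos : 0 < Real.sqrt (1 + x ^ 2) := Real.sqrt_pos.mpr (by positivity)
  rw [hpow, ← div_eq_mul_inv, le_div_iff₀ hsq_pos]
  calc ‖∫ s in Function.support f, g s‖ * Real.sqrt (1 + x ^ 2)
      ≤ B * (1 + |x|) := by
        apply mul_le_mul hAB hsqrt (Real.sqrt_nonneg _) hBnn
  _ = B + |x| * B := by ring
  _ ≤ I1 + M := add_le_add hBI1 hxB
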